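/- For every positive integer n, the number of cyclic subgroups of the dicyclic group Dic_{4n} equals τ(2n) + n. -/

import Mathlib

open Subgroup

lemma subgroup_card_le_setOf {G : Type*} [Group G] [Finite G] [IsCyclic G] {d : ℕ} (hd : 0 < d) :
    ({x : G | x ^ d = 1}).ncard ≤ d := by
  classical
  cases nonempty_fintype G
  have := IsCyclic.card_pow_eq_one_le (α := G) hd
  rwa [Set.ncard_eq_toFinset_card', Set.toFinset_setOf]

lemma subgroup_eq_of_card_eq {G : Type*} [Group G] [Finite G] [IsCyclic G]
    {H K : Subgroup G} (h : Nat.card H = Nat.card K) : H = K := by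
  classical
  set d := Nat.card K with hd
  have hd0 : 0 < d := Nat.card_pos
  have key : ∀ L : Subgroup G, Nat.card L = d → (L : Set G) = {x : G | x ^ d = 1} := by
    intro L hL
    have hsub : (L : Set G) ⊆ {x : G | x ^ d = 1} := by
      intro x hx
      have : (⟨x, hx⟩ : L) ^ d = 1 := by
        rw [← hL]; exact pow_card_eq_one'
      simpa [Subtype.ext_iff] using this
    refine Set.eq_of_subset_of_ncard_le hsub ?_ (Set.toFinite _)
    calc ({x : G | x ^ d = 1}).ncard ≤ d := subgroup_card_le_setOf hd0
    _ = (L : Set G).ncard := by rw [← hL, ← Nat.card_coe_set_eq]; rfl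
  rw [SetLike.ext'_iff, key H h, key K rfl]

lemma card_subgroup_cyclic (G : Type*) [Group G] [Finite G] [IsCyclic G] :
    Nat.card (Subgroup G) = (Nat.card G).divisors.card := by
  classical
  set m := Nat.card G with hm
  have hm0 : 0 < m := Nat.card_pos
  have hsurj : ∀ d ∈ m.divisors, ∃ H : Subgroup G, Nat.card H = d := by
    intro d hd
    rw [Nat.mem_divisors] at hd
    obtain ⟨g, hg⟩ := IsCyclic.exists_generator (α := G)
    have hog : orderOf g = m := orderOf_eq_card_of_forall_mem_zpowers hg
    refine ⟨zpowers (g ^ (m / d)), ?_⟩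
    rw [Nat.card_zpowers, orderOf_pow, hog, Nat.gcd_eq_right (Nat.div_dvd_of_dvd hd.1),
      Nat.div_div_self hd.1 hm0.ne']
  have hmem : ∀ H : Subgroup G, Nat.card H ∈ m.divisors :=
    fun H => Nat.mem_divisors.2 ⟨Subgroup.card_subgroup_dvd_card H, hm0.ne'⟩
  have : Nat.card (Subgroup G) = Nat.card {d // d ∈ m.divisors} := by
    apply Nat.card_eq_of_bijective (fun H => ⟨Nat.card H, hmem H⟩)
    constructor
    · intro H K h; exact subgroup_eq_of_card_eq (by simpa [Subtype.ext_iff] using h)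
    · rintro ⟨d, hd⟩
      obtain ⟨H, hH⟩ := hsurj d hd
      exact ⟨H, by simp [hH]⟩
  rw [this, Nat.card_eq_fintype_card, Fintype.card_coe]
open Subgroup

lemma isCyclic_zpowers {G : Type*} [Group G] (g : G) : IsCyclic (zpowers g) := by
  refine ⟨⟨⟨g, mem_zpowers g⟩, fun x => ?_⟩⟩
  obtain ⟨k, hk⟩ := x.2
  exact ⟨k, Subtype.ext (by simpa using hk)⟩

lemma isCyclic_subgroup_iff_exists {G : Type*} [Group G] {H : Subgroup G} (h : IsCyclic H) :
    ∃ g : G, H = zpowers g := by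
  obtain ⟨⟨g, hgH⟩, hg⟩ := h.exists_generator
  refine ⟨g, le_antisymm (fun x hx => ?_) (zpowers_le.2 hgH)⟩
  obtain ⟨k, hk⟩ := hg ⟨x, hx⟩
  exact ⟨k, by simpa [Subtype.ext_iff] using hk⟩
open Subgroup QuaternionGroup

variable {n : ℕ}

lemma qa_inv (i : ZMod (2*n)) : (a i : QuaternionGroup n)⁻¹ = a (-i) := by
  apply inv_eq_of_mul_eq_one_right
  rw [a_mul_a, add_neg_cancel, ← one_def]

lemma qa_one_zpow (k : ℤ) : (a 1 : QuaternionGroup n) ^ k = a (k : ZMod (2*n)) := by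
  cases k with
  | ofNat m => rw [Int.ofNat_eq_natCast, zpow_natCast, a_one_pow]; norm_cast
  | negSucc m =>
    rw [zpow_negSucc, a_one_pow, qa_inv]
    congr 1
    push_cast
    ring

lemma qa_mem [NeZero n] (i : ZMod (2*n)) : (a i : QuaternionGroup n) ∈ zpowers (a 1) := by
  haveI : NeZero (2*n) := ⟨by have := NeZero.ne n; omega⟩
  refine ⟨(i.val : ℤ), ?_⟩
  show (a 1 : QuaternionGroup n) ^ ((i.val : ℤ)) = a i
  rw [qa_one_zpow]
  congr 1
  push_cast
  rw [ZMod.natCast_val, ZMod.cast_id]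

lemma qxa_not_mem (i : ZMod (2*n)) : (xa i : QuaternionGroup n) ∉ zpowers (a 1) := by
  rintro ⟨k, hk⟩
  have hk' : (a 1 : QuaternionGroup n) ^ k = xa i := hk
  rw [qa_one_zpow] at hk'
  cases hk'

lemma neg_natCast_n : -((n : ZMod (2*n))) = (n : ZMod (2*n)) := by
  have h : ((n : ZMod (2*n)) + n) = 0 := by
    rw [← Nat.cast_add]
    have : n + n = 2 * n := by ring
    rw [this, ZMod.natCast_self]
  exact neg_eq_of_add_eq_zero_left h

lemma qxa_pow_three (i : ZMod (2*n)) :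
    (xa i : QuaternionGroup n) ^ 3 = xa (i + (n : ZMod (2*n))) := by
  rw [pow_succ, xa_sq, a_mul_xa, sub_eq_add_neg, neg_natCast_n]

lemma mem_zpowers_xa_iff [NeZero n] (i : ZMod (2*n)) (x : QuaternionGroup n) :
    x ∈ zpowers (xa i) ↔
      x = 1 ∨ x = a (n : ZMod (2*n)) ∨ x = xa i ∨ x = xa (i + (n : ZMod (2*n))) := by
  constructor
  · intro hx
    obtain ⟨m, hm⟩ := mem_powers_iff_mem_zpowers.2 hx
    have hm' : (xa i : QuaternionGroup n) ^ m = x := hm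
    rw [← pow_mod_orderOf, orderOf_xa] at hm'
    have hr : m % 4 < 4 := Nat.mod_lt _ (by norm_num)
    interval_cases h : m % 4
    · left; rw [← hm', pow_zero]
    · right; right; left; rw [← hm', pow_one]
    · right; left; rw [← hm', xa_sq]
    · right; right; right; rw [← hm', qxa_pow_three]
  · rintro (rfl | rfl | rfl | rfl)
    · exact one_mem _
    · rw [← xa_sq i]; exact pow_mem (mem_zpowers _) 2
    · exact mem_zpowers _
    · rw [← qxa_pow_three i]; exact pow_mem (mem_zpowers _) 3
open Subgroup QuaternionGroup

variable {n : ℕ}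

section Quat

lemma natCast_n_add_n : ((n : ZMod (2*n)) + n) = 0 := by
  rw [← Nat.cast_add]
  have : n + n = 2 * n := by ring
  rw [this, ZMod.natCast_self]

lemma zpowers_xa_add_n (i : ZMod (2*n)) :
    zpowers (xa (i + (n : ZMod (2*n))) : QuaternionGroup n) = zpowers (xa i) := by
  apply le_antisymm
  · rw [zpowers_le, ← qxa_pow_three]
    exact pow_mem (mem_zpowers _) 3
  · rw [zpowers_le]
    have : xa i = (xa (i + (n : ZMod (2*n))) : QuaternionGroup n) ^ 3 := by
      rw [qxa_pow_three, add_assoc, natCast_n_add_n, add_zero]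
    rw [this]
    exact pow_mem (mem_zpowers _) 3

lemma zpowers_xa_inj [NeZero n] {i j : ZMod (2*n)}
    (h : zpowers (xa i : QuaternionGroup n) = zpowers (xa j)) :
    i = j ∨ i = j + (n : ZMod (2*n)) := by
  have hx : (xa i : QuaternionGroup n) ∈ zpowers (xa j) := h ▸ mem_zpowers _
  rw [mem_zpowers_xa_iff] at hx
  rcases hx with h1 | h1 | h1 | h1
  · rw [one_def] at h1; exact absurd h1 (by intro h; cases h)
  · exact absurd h1 (by simp)
  · left; simpa using h1
  · right; simpa using h1

lemma isCyclic_subgroup_iff_quaternion [NeZero n] (H : Subgroup (QuaternionGroup n)) :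
    IsCyclic H ↔ H ≤ zpowers (a 1) ∨ ∃ i, H = zpowers (xa i) := by
  constructor
  · intro h
    obtain ⟨g, rfl⟩ := isCyclic_subgroup_iff_exists h
    cases g with
    | a i => left; rw [zpowers_le]; exact qa_mem i
    | xa i => right; exact ⟨i, rfl⟩
  · rintro (h | ⟨i, rfl⟩)
    · haveI := _root_.isCyclic_zpowers (a 1 : QuaternionGroup n)
      exact Subgroup.isCyclic_of_le h
    · exact _root_.isCyclic_zpowers _

end Quat

theorem card_cyclic_subgroup_quaternionGroup' (n : ℕ) (hn : 0 < n) :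
    Nat.card {H : Subgroup (QuaternionGroup n) // IsCyclic H} = (2*n).divisors.card + n := by
  haveI : NeZero n := ⟨hn.ne'⟩
  set G := QuaternionGroup n with hG
  set A : Subgroup G := zpowers (a 1) with hA
  set f : Fin n → Subgroup G := fun i => zpowers (xa ((i : ℕ) : ZMod (2*n))) with hf
  have hfinj : Function.Injective f := by
    intro i j hij
    rcases zpowers_xa_inj hij with h | h
    · have := congrArg ZMod.val h
      rw [ZMod.val_cast_of_lt (by omega), ZMod.val_cast_of_lt (by omega)] at this
      exact Fin.ext this
    · rw [← Nat.cast_add] at h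
      have := congrArg ZMod.val h
      rw [ZMod.val_cast_of_lt (by omega), ZMod.val_cast_of_lt (by omega)] at this
      omega
  have hset : {H : Subgroup G | IsCyclic H} = {H | H ≤ A} ∪ Set.range f := by
    ext H
    simp only [Set.mem_setOf_eq, Set.mem_union, Set.mem_range]
    rw [isCyclic_subgroup_iff_quaternion]
    constructor
    · rintro (h | ⟨i, rfl⟩)
      · left; exact h
      · right
        by_cases hi : i.val < n
        · refine ⟨⟨i.val, hi⟩, ?_⟩
          show zpowers (xa ((i.val : ℕ) : ZMod (2*n))) = _
          rw [ZMod.natCast_val, ZMod.cast_id]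
        · refine ⟨⟨i.val - n, by have := i.val_lt; omega⟩, ?_⟩
          show zpowers (xa ((i.val - n : ℕ) : ZMod (2*n))) = _
          have hi' : i = ((i.val - n : ℕ) : ZMod (2*n)) + (n : ZMod (2*n)) := by
            rw [← Nat.cast_add]
            have h2 : i.val - n + n = i.val := by omega
            rw [h2, ZMod.natCast_val, ZMod.cast_id]
          conv_rhs => rw [hi']
          rw [zpowers_xa_add_n]
    · rintro (h | ⟨i, rfl⟩)
      · left; exact h
      · right; exact ⟨_, rfl⟩
  have hdisj : Disjoint {H : Subgroup G | H ≤ A} (Set.range f) := by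
    rw [Set.disjoint_left]
    rintro H hH ⟨i, rfl⟩
    exact qxa_not_mem _ (hH (mem_zpowers _))
  have h1 : Nat.card {H : Subgroup G // IsCyclic H}
      = ({H : Subgroup G | H ≤ A}).ncard + (Set.range f).ncard := by
    rw [show {H : Subgroup G // IsCyclic H} = ↥{H : Subgroup G | IsCyclic H} from rfl,
      Nat.card_coe_set_eq, hset, Set.ncard_union_eq hdisj (Set.toFinite _) (Set.toFinite _)]
  rw [h1]
  have h2 : (Set.range f).ncard = n := by
    rw [← Nat.card_coe_set_eq, Nat.card_range_of_injective hfinj, Nat.card_eq_fintype_card,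
      Fintype.card_fin]
  have hAcard : Nat.card ↥A = 2 * n := by
    rw [hA, Nat.card_zpowers, orderOf_a_one]
  have h3 : ({H : Subgroup G | H ≤ A}).ncard = (2*n).divisors.card := by
    rw [← Nat.card_coe_set_eq]
    haveI : IsCyclic ↥A := _root_.isCyclic_zpowers _
    have e : Subgroup ↥A ≃ {H : Subgroup G // H ≤ A} :=
      { toFun := fun K => ⟨K.map A.subtype, map_subtype_le K⟩
        invFun := fun H => H.1.subgroupOf A
        left_inv := fun K => comap_map_eq_self_of_injective A.subtype_injective K
        right_inv := fun H => Subtype.ext (by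
          simp only [subgroupOf_map_subtype]
          exact inf_eq_left.2 H.2) }
    rw [show ↥{H : Subgroup G | H ≤ A} = {H : Subgroup G // H ≤ A} from rfl,
      ← Nat.card_congr e, card_subgroup_cyclic, hAcard]
  rw [h2, h3]

/-- `tau k` is the number of positive divisors of `k`. -/
def tau (k : ℕ) : ℕ := k.divisors.card

/-- The number of cyclic subgroups of the dicyclic group `Dic_{4n}` equals `τ(2n) + n`. -/
theorem card_cyclic_subgroup_quaternionGroup (n : ℕ) (hn : 0 < n) :
    Nat.card {H : Subgroup (QuaternionGroup n) // IsCyclic H} = tau (2 * n) + n := by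
  exact card_cyclic_subgroup_quaternionGroup' n hn
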